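/- Under the same hypotheses (Q m × n with orthonormal columns, B symmetric n × n, X = QQᵀX + UR with UᵀU = I, QᵀU = 0), the subtraction case holds: Q B Qᵀ - X Xᵀ = Q_c B_c Q_cᵀ with Q_c = [Q U] and B_c = [[B - (QᵀX)(QᵀX)ᵀ, -(QᵀX)Rᵀ], [-R(QᵀX)ᵀ, -RRᵀ]]. -/

import Mathlib

open Matrix

theorem stmt_3 (m n k : ℕ)
    (Q : Matrix (Fin m) (Fin n) ℝ) (hQ : Qᵀ * Q = 1)
    (B : Matrix (Fin n) (Fin n) ℝ) (hB : Bᵀ = B)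
    (X : Matrix (Fin m) (Fin k) ℝ)
    (U : Matrix (Fin m) (Fin k) ℝ) (hU : Uᵀ * U = 1) (hQU : Qᵀ * U = 0)
    (R : Matrix (Fin k) (Fin k) ℝ) (hX : X = Q * (Qᵀ * X) + U * R) :
    Q * B * Qᵀ - X * Xᵀ =
      Matrix.fromCols Q U *
        Matrix.fromBlocks (B - (Qᵀ * X) * (Qᵀ * X)ᵀ) (-((Qᵀ * X) * Rᵀ))
          (-(R * (Qᵀ * X)ᵀ)) (-(R * Rᵀ)) *
        (Matrix.fromCols Q U)ᵀ := by
  rw [Matrix.transpose_fromCols, Matrix.fromCols_mul_fromBlocks,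
    Matrix.fromCols_mul_fromRows]
  set Y := Qᵀ * X with hY
  rw [hX]
  simp only [Matrix.transpose_add, Matrix.transpose_mul, Matrix.transpose_transpose]
  simp only [Matrix.mul_add, Matrix.add_mul, Matrix.mul_smul, Matrix.smul_mul, Matrix.mul_assoc, add_mul, mul_add, sub_mul, mul_sub, Matrix.sub_mul, Matrix.mul_sub, neg_smul, one_smul, Matrix.neg_mul, Matrix.mul_neg]
  abel
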